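/- In the category of groupoids, every functor that is injective on objects and an equivalence has the left lifting property with respect to every isofibration. -/

import Mathlib

open CategoryTheory

/-- A functor is an isofibration if every isomorphism with source in its image
lifts to an isomorphism with prescribed source. -/
def IsIsofibration {A B : Type*} [Category A] [Category B] (F : A ⥤ B) : Prop :=
  ∀ (a : A) (b : B) (e : F.obj a ≅ b), ∃ (a' : A) (α : a ≅ a') (h : F.obj a' = b),
    F.map α.hom ≫ eqToHom h = e.hom

section Aux

variable {A B E D : Grpd} (i : A ⟶ B) (p : E ⟶ D) (f : A ⟶ E) (g : B ⟶ D)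

/-- Data collected at each object `b : B` for constructing the lift. -/
structure LiftData (b : B) where
  a : A
  η : i.obj a ≅ b
  x : E
  θ : f.obj a ≅ x
  hpf : p.obj (f.obj a) = g.obj (i.obj a)
  hx : p.obj x = g.obj b
  compat : p.map θ.hom ≫ eqToHom hx = eqToHom hpf ≫ g.map η.hom

variable [i.IsEquivalence]

open Classical in
noncomputable def liftData (hfib : IsIsofibration p)
    (sq : f ≫ p = i ≫ g) (b : B) : LiftData i p f g b :=
  if h : ∃ a0 : ↑A, i.obj a0 = b then
    ⟨h.choose, eqToIso h.choose_spec, f.obj h.choose, Iso.refl _,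
      Functor.congr_obj sq _,
      (Functor.congr_obj sq h.choose).trans (congrArg g.obj h.choose_spec),
      by simp [eqToHom_map]⟩
  else
    let a0 := i.objPreimage b
    let η : i.obj a0 ≅ b := i.objObjPreimageIso b
    let e : p.obj (f.obj a0) ≅ g.obj b :=
      eqToIso (Functor.congr_obj sq a0) ≪≫ g.mapIso η
    let hh := hfib (f.obj a0) (g.obj b) e
    ⟨a0, η, hh.choose, hh.choose_spec.choose, Functor.congr_obj sq a0,
      hh.choose_spec.choose_spec.choose,
      hh.choose_spec.choose_spec.choose_spec⟩

theorem liftData_a (hinj : Function.Injective i.obj)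
    (hfib : IsIsofibration p) (sq : f ≫ p = i ≫ g) (a0 : A) :
    (liftData i p f g hfib sq (i.obj a0)).a = a0 := by
  have h : ∃ a1 : ↑A, i.obj a1 = i.obj a0 := ⟨a0, rfl⟩
  simp only [liftData, dif_pos h]
  exact hinj h.choose_spec

theorem liftData_x (hfib : IsIsofibration p) (sq : f ≫ p = i ≫ g) (a0 : A) :
    (liftData i p f g hfib sq (i.obj a0)).x
      = f.obj (liftData i p f g hfib sq (i.obj a0)).a := by
  have h : ∃ a1 : ↑A, i.obj a1 = i.obj a0 := ⟨a0, rfl⟩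
  simp only [liftData, dif_pos h]

theorem liftData_η (hfib : IsIsofibration p) (sq : f ≫ p = i ≫ g) (a0 : A) :
    HEq (liftData i p f g hfib sq (i.obj a0)).η.hom (𝟙 (i.obj a0)) := by
  have h : ∃ a1 : ↑A, i.obj a1 = i.obj a0 := ⟨a0, rfl⟩
  unfold liftData
  rw [dif_pos h]
  simpa using eqToHom_comp_heq (𝟙 (i.obj a0)) h.choose_spec

theorem liftData_θ (hfib : IsIsofibration p) (sq : f ≫ p = i ≫ g)
    (hinj : Function.Injective i.obj) (a0 : A) :
    HEq (liftData i p f g hfib sq (i.obj a0)).θ.hom (𝟙 (f.obj a0)) := by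
  have h : ∃ a1 : ↑A, i.obj a1 = i.obj a0 := ⟨a0, rfl⟩
  have ha : h.choose = a0 := hinj h.choose_spec
  unfold liftData
  rw [dif_pos h]
  show HEq (𝟙 (f.obj h.choose)) (𝟙 (f.obj a0))
  rw [ha]

/-- An isomorphism whose `hom` is heterogeneously an identity is an `eqToIso`. -/
theorem iso_eq_eqToIso {C : Type*} [Category C] {X Y Z : C} (e : X ≅ Y) (hX : X = Z)
    (hY : Y = Z) (hh : HEq e.hom (𝟙 Z)) : e = eqToIso (hX.trans hY.symm) := by
  subst hX; subst hY
  exact Iso.ext (eq_of_heq hh)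

/-- The lifting functor. -/
noncomputable def liftFunctor (hfib : IsIsofibration p) (sq : f ≫ p = i ≫ g) :
    ↑B ⥤ ↑E where
  obj b := (liftData i p f g hfib sq b).x
  map {b b'} β :=
    (liftData i p f g hfib sq b).θ.inv ≫
      f.map (i.preimage ((liftData i p f g hfib sq b).η.hom ≫ β ≫
        (liftData i p f g hfib sq b').η.inv)) ≫
      (liftData i p f g hfib sq b').θ.hom
  map_id b := by
    have h1 : i.preimage ((liftData i p f g hfib sq b).η.hom ≫ 𝟙 b ≫
        (liftData i p f g hfib sq b).η.inv) = 𝟙 _ :=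
      i.map_injective (by simp)
    rw [h1]
    simp
  map_comp {b b' b''} β γ := by
    have h1 : i.preimage ((liftData i p f g hfib sq b).η.hom ≫ (β ≫ γ) ≫
          (liftData i p f g hfib sq b'').η.inv)
        = i.preimage ((liftData i p f g hfib sq b).η.hom ≫ β ≫
            (liftData i p f g hfib sq b').η.inv) ≫
          i.preimage ((liftData i p f g hfib sq b').η.hom ≫ γ ≫
            (liftData i p f g hfib sq b'').η.inv) :=
      i.map_injective (by simp)
    rw [h1]
    simp

theorem lift_fac_left (hinj : Function.Injective i.obj)
    (hfib : IsIsofibration p) (sq : f ≫ p = i ≫ g) :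
    i ≫ liftFunctor i p f g hfib sq = f := by
  rw [Grpd.comp_eq_comp]
  show (i ⋙ liftFunctor i p f g hfib sq : ↑A ⥤ ↑E) = (f : ↑A ⥤ ↑E)
  fapply CategoryTheory.Functor.ext
  · intro a
    exact (liftData_x i p f g hfib sq a).trans
      (congrArg f.obj (liftData_a i p f g hinj hfib sq a))
  · intro a a' u
    have hηa := iso_eq_eqToIso (liftData i p f g hfib sq (i.obj a)).η
      (congrArg i.obj (liftData_a i p f g hinj hfib sq a)) rfl
      (liftData_η i p f g hfib sq a)
    have hηa' := iso_eq_eqToIso (liftData i p f g hfib sq (i.obj a')).η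
      (congrArg i.obj (liftData_a i p f g hinj hfib sq a')) rfl
      (liftData_η i p f g hfib sq a')
    have hθa := iso_eq_eqToIso (liftData i p f g hfib sq (i.obj a)).θ
      (congrArg f.obj (liftData_a i p f g hinj hfib sq a))
      ((liftData_x i p f g hfib sq a).trans
        (congrArg f.obj (liftData_a i p f g hinj hfib sq a)))
      (liftData_θ i p f g hfib sq hinj a)
    have hθa' := iso_eq_eqToIso (liftData i p f g hfib sq (i.obj a')).θ
      (congrArg f.obj (liftData_a i p f g hinj hfib sq a'))
      ((liftData_x i p f g hfib sq a').trans
        (congrArg f.obj (liftData_a i p f g hinj hfib sq a')))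
      (liftData_θ i p f g hfib sq hinj a')
    have hpre : i.preimage ((liftData i p f g hfib sq (i.obj a)).η.hom ≫ i.map u ≫
          (liftData i p f g hfib sq (i.obj a')).η.inv)
        = eqToHom (liftData_a i p f g hinj hfib sq a) ≫ u ≫
          eqToHom (liftData_a i p f g hinj hfib sq a').symm :=
      i.map_injective (by rw [hηa, hηa']; simp [eqToHom_map])
    show (liftFunctor i p f g hfib sq).map (i.map u) = _
    show (liftData i p f g hfib sq (i.obj a)).θ.inv ≫ _ ≫ _ = _
    rw [hpre, hθa, hθa']
    simp [eqToHom_map]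
    rfl

theorem lift_fac_right (hfib : IsIsofibration p) (sq : f ≫ p = i ≫ g) :
    liftFunctor i p f g hfib sq ≫ p = g := by
  rw [Grpd.comp_eq_comp]
  show (liftFunctor i p f g hfib sq ⋙ p : ↑B ⥤ ↑D) = (g : ↑B ⥤ ↑D)
  fapply CategoryTheory.Functor.ext
  · intro b
    exact (liftData i p f g hfib sq b).hx
  · intro b b' β
    have hθ : ∀ b, p.mapIso (liftData i p f g hfib sq b).θ
        = eqToIso (liftData i p f g hfib sq b).hpf ≪≫
          g.mapIso (liftData i p f g hfib sq b).η ≪≫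
          eqToIso (liftData i p f g hfib sq b).hx.symm := by
      intro b
      apply Iso.ext
      have := (liftData i p f g hfib sq b).compat
      rw [comp_eqToHom_iff] at this
      simpa using this
    have hθhom : ∀ b, p.map (liftData i p f g hfib sq b).θ.hom
        = eqToHom (liftData i p f g hfib sq b).hpf ≫
          g.map (liftData i p f g hfib sq b).η.hom ≫
          eqToHom (liftData i p f g hfib sq b).hx.symm := by
      intro b; have := congrArg Iso.hom (hθ b); simpa using this
    have hθinv : ∀ b, p.map (liftData i p f g hfib sq b).θ.inv
        = eqToHom (liftData i p f g hfib sq b).hx ≫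
          g.map (liftData i p f g hfib sq b).η.inv ≫
          eqToHom (liftData i p f g hfib sq b).hpf.symm := by
      intro b; have := congrArg Iso.inv (hθ b); simpa using this
    set α := i.preimage ((liftData i p f g hfib sq b).η.hom ≫ β ≫
      (liftData i p f g hfib sq b').η.inv) with hα
    have hf : p.map (f.map α) = eqToHom (liftData i p f g hfib sq b).hpf ≫
        g.map (i.map α) ≫ eqToHom (Functor.congr_obj sq _).symm := by
      have := Functor.congr_hom sq α
      simp only [Grpd.comp_eq_comp, Functor.comp_map] at this
      rw [this]
    show p.map ((liftData i p f g hfib sq b).θ.inv ≫ f.map α ≫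
        (liftData i p f g hfib sq b').θ.hom) = _
    rw [p.map_comp, p.map_comp, hθinv, hθhom, hf, Functor.map_preimage]
    simp [eqToHom_trans]
    rfl

end Aux

/-- In the category of groupoids, every injective-on-objects equivalence has
the left lifting property with respect to every isofibration. -/
theorem injective_equivalence_llp_isofibration
    {A B E D : Grpd} (i : A ⟶ B) (p : E ⟶ D)
    (hinj : Function.Injective i.obj) (heq : i.IsEquivalence)
    (hfib : IsIsofibration p) :
    HasLiftingProperty i p := by
  haveI := heq
  constructor
  intro F G sq
  exact ⟨⟨⟨liftFunctor i p F G hfib sq.w,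
    lift_fac_left i p F G hinj hfib sq.w,
    lift_fac_right i p F G hfib sq.w⟩⟩⟩
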